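/- Let m ≥ 2 and 1 ≤ r ≤ m. Let 𝒟_A be a real probability distribution with mean μ_A, second moment ν_A and variance σ_A² = ν_A − μ_A² (all finite), let A₁, A₂ ∈ ℝ^{(m−1)×(m−1)} have i.i.d. entries distributed as 𝒟_A, and let a : (ℤ_m)³ → ℝ be the embedded signal supported on X₁∪X₂ (a(−i,j,0) = (A₁)_{i,j}, a(0,−i,j) = (A₂)_{i,j}). Let ξ, η ∈ (ℤ_m)³ both have all three coordinates in {r,…,m−1} (i.e., ξ, η ∉ K₁∪K₂∪K₃ where Kᵢ = {ζ : ζᵢ ∈ {0,…,r−1}}), and set δ = ξ − η. Then E[â(ξ)·conj(â(η))] = 4μ_A²/m³ + (σ_A²/m³)·Σ_{x∈X₁∪X₂} ω^{x·δ}; in particular this expectation depends on (ξ,η) only through δ, and |E[â(ξ)·conj(â(η))]| ≤ 4μ_A²/m³ + σ_A²·q_a(δ), where q_a(δ) = 2/m if (δ₁=δ₂=0 or δ₂=δ₃=0), q_a(δ) = 2/m³ if δ₁, δ₂, δ₃ are all nonzero, and q_a(δ) = 2/m² otherwise. The analogous statement holds for the signal b supported on X₂∪X₃ built from matrices with i.i.d.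 entries from a distribution 𝒟_B (mean μ_B, variance σ_B²), with the bound q_b(δ) = 2/m if (δ₂=δ₃=0 or δ₃=δ₁=0), q_b(δ) = 2/m³ if all coordinates of δ are nonzero, and q_b(δ) = 2/m² otherwise. -/

import Mathlib

open MeasureTheory ProbabilityTheory

/-- `ω^k` where `ω = exp(-2πi/m)` and `k` is the canonical representative of
`x ∈ ℤ_m`. -/
noncomputable def zchar (m : ℕ) (x : ZMod m) : ℂ :=
  Complex.exp ((-2) * (Real.pi : ℂ) * Complex.I * (x.val : ℂ) / (m : ℂ))

noncomputable def zeta (m : ℕ) : ℂ := Complex.exp ((-2) * (Real.pi : ℂ) * Complex.I / (m : ℂ))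

lemma zchar_eq (m : ℕ) (x : ZMod m) : zchar m x = zeta m ^ x.val := by
  rw [zchar, zeta, ← Complex.exp_nat_mul]
  ring_nf

lemma zeta_pow_m (m : ℕ) [NeZero m] : zeta m ^ m = 1 := by
  rw [zeta, ← Complex.exp_nat_mul]
  have hm : (m : ℂ) ≠ 0 := Nat.cast_ne_zero.2 (NeZero.ne m)
  have : (m : ℂ) * ((-2) * (Real.pi : ℂ) * Complex.I / (m : ℂ)) =
      (-2) * (Real.pi : ℂ) * Complex.I := by field_simp
  rw [this]
  have := Complex.exp_int_mul_two_pi_mul_I (-1)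
  simpa [mul_comm, mul_assoc, mul_left_comm] using
    (by rw [show ((-2) * (Real.pi : ℂ) * Complex.I) = (((-1 : ℤ) : ℂ)) * (2 * Real.pi * Complex.I) by push_cast; ring]
        exact this : Complex.exp ((-2) * (Real.pi : ℂ) * Complex.I) = 1)

lemma zeta_ne_zero (m : ℕ) : zeta m ≠ 0 := Complex.exp_ne_zero _

lemma zeta_pow_mod (m : ℕ) [NeZero m] (k : ℕ) : zeta m ^ (k % m) = zeta m ^ k := by
  conv_rhs => rw [← Nat.mod_add_div k m]
  rw [pow_add, pow_mul, zeta_pow_m, one_pow, mul_one]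

lemma zchar_zero (m : ℕ) : zchar m 0 = 1 := by
  simp [zchar]

lemma zchar_add (m : ℕ) [NeZero m] (x y : ZMod m) :
    zchar m (x + y) = zchar m x * zchar m y := by
  rw [zchar_eq, zchar_eq, zchar_eq, ← pow_add, ZMod.val_add, zeta_pow_mod]

lemma zchar_mul_neg (m : ℕ) [NeZero m] (x : ZMod m) : zchar m x * zchar m (-x) = 1 := by
  rw [← zchar_add]; simp [zchar_zero]

lemma zchar_neg (m : ℕ) [NeZero m] (x : ZMod m) : zchar m (-x) = (zchar m x)⁻¹ := by
  have h := zchar_mul_neg m x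
  have hne : zchar m x ≠ 0 := by rw [zchar]; exact Complex.exp_ne_zero _
  field_simp at h ⊢
  linear_combination h

lemma zchar_star (m : ℕ) [NeZero m] (x : ZMod m) : star (zchar m x) = zchar m (-x) := by
  rw [zchar_neg, zchar]
  rw [show (star (Complex.exp (-2 * ↑Real.pi * Complex.I * ↑x.val / ↑m)) : ℂ) =
      (starRingEnd ℂ) (Complex.exp (-2 * ↑Real.pi * Complex.I * ↑x.val / ↑m)) from rfl,
    ← Complex.exp_conj, ← Complex.exp_neg]
  congr 1
  rw [map_div₀]
  simp only [map_mul, map_neg, Complex.conj_I, Complex.conj_natCast, Complex.conj_ofReal,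
    map_ofNat]
  ring

/-- The dot product `g·ξ` on `(ℤ_m)³`, computed in `ℤ_m`. -/
def dot3 {m : ℕ} (g ξ : ZMod m × ZMod m × ZMod m) : ZMod m :=
  g.1 * ξ.1 + g.2.1 * ξ.2.1 + g.2.2 * ξ.2.2

/-- The embedding `{1,…,m-1} → ℤ_m`, `i ↦ i+1` for `i : Fin (m-1)`. -/
def emb (m : ℕ) (i : Fin (m - 1)) : ZMod m := (((i : ℕ) + 1 : ℕ) : ZMod m)

/-- The embedded `a`-signal on `(ℤ_m)³`: `a(-i, j, 0) = (A₁)_{i,j}` and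
`a(0, -i, j) = (A₂)_{i,j}`, zero elsewhere (supported on `X₁ ∪ X₂`). -/
noncomputable def aSig (m : ℕ) (A1 A2 : Fin (m - 1) → Fin (m - 1) → ℝ)
    (g : ZMod m × ZMod m × ZMod m) : ℝ :=
  (∑ i, ∑ j, if g = (-(emb m i), emb m j, 0) then A1 i j else 0) +
    (∑ i, ∑ j, if g = (0, -(emb m i), emb m j) then A2 i j else 0)

/-- The embedded `b`-signal on `(ℤ_m)³`: `b(0, -i, j) = (B₁)_{i,j}` and
`b(j, 0, -i) = (B₂)_{i,j}`, zero elsewhere (supported on `X₂ ∪ X₃`). -/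
noncomputable def bSig (m : ℕ) (B1 B2 : Fin (m - 1) → Fin (m - 1) → ℝ)
    (g : ZMod m × ZMod m × ZMod m) : ℝ :=
  (∑ i, ∑ j, if g = (0, -(emb m i), emb m j) then B1 i j else 0) +
    (∑ i, ∑ j, if g = (emb m j, 0, -(emb m i)) then B2 i j else 0)

/-- The Fourier transform on `(ℤ_m)³`: `f̂(ξ) = m^{-3/2} Σ_g f(g) ω^{g·ξ}`,
`ω = exp(-2πi/m)`. -/
noncomputable def ftC (m : ℕ) [NeZero m] (f : ZMod m × ZMod m × ZMod m → ℂ)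
    (ξ : ZMod m × ZMod m × ZMod m) : ℂ :=
  (((m : ℝ) ^ ((-3 : ℝ) / 2) : ℝ) : ℂ) * ∑ g, f g * zchar m (dot3 g ξ)

/-- The bound `q_a(δ)`. -/
noncomputable def qa (m : ℕ) (δ : ZMod m × ZMod m × ZMod m) : ℝ :=
  if (δ.1 = 0 ∧ δ.2.1 = 0) ∨ (δ.2.1 = 0 ∧ δ.2.2 = 0) then 2 / (m : ℝ)
  else if δ.1 ≠ 0 ∧ δ.2.1 ≠ 0 ∧ δ.2.2 ≠ 0 then 2 / (m : ℝ) ^ 3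
  else 2 / (m : ℝ) ^ 2

/-- The bound `q_b(δ)`. -/
noncomputable def qb (m : ℕ) (δ : ZMod m × ZMod m × ZMod m) : ℝ :=
  if (δ.2.1 = 0 ∧ δ.2.2 = 0) ∨ (δ.2.2 = 0 ∧ δ.1 = 0) then 2 / (m : ℝ)
  else if δ.1 ≠ 0 ∧ δ.2.1 ≠ 0 ∧ δ.2.2 ≠ 0 then 2 / (m : ℝ) ^ 3
  else 2 / (m : ℝ) ^ 2


open Finset
/-- sum of zchar over all of ZMod m of t*s -/
lemma sum_zchar_mul (m : ℕ) [NeZero m] (s : ZMod m) :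
    ∑ t : ZMod m, zchar m (t * s) = if s = 0 then (m : ℂ) else 0 := by
  have hstep : ∀ t : ZMod m, zchar m (t * s) = (zeta m ^ s.val) ^ t.val := by
    intro t
    rw [zchar_eq, ZMod.val_mul, zeta_pow_mod, ← pow_mul, mul_comm]
  simp only [hstep]
  have hbij : ∑ t : ZMod m, (zeta m ^ s.val) ^ t.val
      = ∑ k ∈ range m, (zeta m ^ s.val) ^ k := by
    refine Finset.sum_bij' (fun t _ => t.val) (fun k _ => (k : ZMod m)) ?_ ?_ ?_ ?_ ?_
    · intro t _; exact mem_range.2 (ZMod.val_lt t)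
    · intro k _; exact mem_univ _
    · intro t _; exact ZMod.natCast_rightInverse t
    · intro k hk; exact ZMod.val_cast_of_lt (mem_range.1 hk)
    · intro t _; rfl
  rw [hbij]
  by_cases hs : s = 0
  · simp [hs, ZMod.val_zero]
  · have hw : zeta m ^ s.val ≠ 1 := by
      intro h
      have hprim : IsPrimitiveRoot (Complex.exp (2 * Real.pi * Complex.I / m)) m :=
        Complex.isPrimitiveRoot_exp m (NeZero.ne m)
      have hz : zeta m = (Complex.exp (2 * Real.pi * Complex.I / m))⁻¹ := by
        rw [zeta, ← Complex.exp_neg]; ring_nf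
      have hprim' : IsPrimitiveRoot (zeta m) m := hz ▸ hprim.inv
      have hdvd := (hprim'.pow_eq_one_iff_dvd s.val).1 h
      have hlt := ZMod.val_lt s
      exact hs ((ZMod.val_eq_zero s).1 (Nat.eq_zero_of_dvd_of_lt hdvd hlt))
    rw [geom_sum_eq hw m, ← pow_mul, mul_comm s.val m, pow_mul, zeta_pow_m, one_pow]
    simp [hs]

noncomputable def eC (m : ℕ) (s : ZMod m) : ℂ := if s = 0 then (m : ℂ) - 1 else -1
noncomputable def eR (m : ℕ) (s : ZMod m) : ℝ := if s = 0 then (m : ℝ) - 1 else -1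

lemma eC_eq_eR (m : ℕ) (s : ZMod m) : eC m s = ((eR m s : ℝ) : ℂ) := by
  by_cases h : s = 0 <;> simp [eC, eR, h]

lemma sum_if_zchar (m : ℕ) [NeZero m] (s : ZMod m) :
    ∑ a : ZMod m, (if a ≠ 0 then zchar m (a * s) else 0) = eC m s := by
  have h : ∀ a : ZMod m, (if a ≠ 0 then zchar m (a * s) else 0)
      = zchar m (a * s) - (if a = 0 then zchar m (a * s) else 0) := by
    intro a; by_cases h : a = 0 <;> simp [h]
  simp only [h]
  rw [Finset.sum_sub_distrib, sum_zchar_mul m s, Finset.sum_ite_eq' Finset.univ 0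
    (fun a => zchar m (a * s))]
  by_cases hs : s = 0 <;> simp [hs, eC, zchar_zero]

lemma sum_emb (m : ℕ) [NeZero m] (f : ZMod m → ℂ) :
    ∑ i : Fin (m - 1), f (emb m i) = ∑ a : ZMod m, (if a ≠ 0 then f a else 0) := by
  have hm1 : 1 ≤ m := Nat.pos_of_ne_zero (NeZero.ne m)
  rw [show (∑ a : ZMod m, (if a ≠ 0 then f a else 0))
      = ∑ a ∈ Finset.univ.filter (fun a : ZMod m => a ≠ 0), f a by rw [Finset.sum_filter]]
  have hvemb : ∀ i : Fin (m - 1), (emb m i).val = (i : ℕ) + 1 := by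
    intro i
    exact ZMod.val_cast_of_lt (by omega)
  refine (Finset.sum_bij' (fun (i : Fin (m - 1)) _ => emb m i)
    (fun a ha => (⟨a.val - 1, by
      have h0 : a ≠ 0 := (Finset.mem_filter.1 ha).2
      have h1 : a.val ≠ 0 := fun hv => h0 ((ZMod.val_eq_zero a).1 hv)
      have h2 := ZMod.val_lt a
      omega⟩ : Fin (m - 1))) ?_ ?_ ?_ ?_ ?_)
  · intro i _
    refine Finset.mem_filter.2 ⟨Finset.mem_univ _, fun h => ?_⟩
    have h' : emb m i = 0 := h
    have := hvemb i
    rw [h', ZMod.val_zero] at this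
    omega
  · intro a _; exact Finset.mem_univ _
  · intro i _
    apply Fin.ext
    simp [hvemb i]
  · intro a ha
    have h0 : a ≠ 0 := (Finset.mem_filter.1 ha).2
    have h1 : a.val ≠ 0 := fun hv => h0 ((ZMod.val_eq_zero a).1 hv)
    show ((((a.val - 1 : ℕ)) + 1 : ℕ) : ZMod m) = a
    rw [show (a.val - 1) + 1 = a.val by omega]
    exact ZMod.natCast_rightInverse a
  · intro i _; rfl

lemma sum_emb_zchar (m : ℕ) [NeZero m] (s : ZMod m) :
    ∑ i : Fin (m - 1), zchar m (emb m i * s) = eC m s := by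
  rw [sum_emb m (fun a => zchar m (a * s))]; exact sum_if_zchar m s

lemma sum_emb_zchar_neg (m : ℕ) [NeZero m] (s : ZMod m) :
    ∑ i : Fin (m - 1), zchar m (-(emb m i) * s) = eC m s := by
  have h : ∀ i : Fin (m - 1), -(emb m i) * s = emb m i * (-s) := by intro i; ring
  simp only [h]
  rw [sum_emb_zchar m (-s)]
  simp [eC, neg_eq_zero]

lemma double_sum (m : ℕ) [NeZero m] (u v : ZMod m) :
    ∑ i : Fin (m - 1), ∑ j : Fin (m - 1), zchar m (-(emb m i) * u + emb m j * v)
      = eC m u * eC m v := by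
  simp only [zchar_add]
  rw [← Finset.sum_mul_sum, sum_emb_zchar_neg, sum_emb_zchar]

lemma double_sum' (m : ℕ) [NeZero m] (u v : ZMod m) :
    ∑ i : Fin (m - 1), ∑ j : Fin (m - 1), zchar m (emb m j * u + -(emb m i) * v)
      = eC m u * eC m v := by
  rw [Finset.sum_comm]
  simp only [zchar_add]
  rw [← Finset.sum_mul_sum, sum_emb_zchar, sum_emb_zchar_neg, mul_comm]

lemma sum_if_eq_zero_zchar (m : ℕ) [NeZero m] (s : ZMod m) :
    ∑ c : ZMod m, (if c = 0 then zchar m (c * s) else 0) = 1 := by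
  rw [Finset.sum_ite_eq' Finset.univ 0 (fun c => zchar m (c * s))]
  simp [zchar_zero]

lemma filter_sum_nnz (m : ℕ) [NeZero m] (δ : ZMod m × ZMod m × ZMod m) :
    ∑ x ∈ Finset.univ.filter
        (fun g : ZMod m × ZMod m × ZMod m => g.1 ≠ 0 ∧ g.2.1 ≠ 0 ∧ g.2.2 = 0),
      zchar m (dot3 x δ) = eC m δ.1 * eC m δ.2.1 := by
  rw [Finset.sum_filter, Fintype.sum_prod_type]
  simp only [Fintype.sum_prod_type]
  have key : ∀ a b c : ZMod m,
      (if a ≠ 0 ∧ b ≠ 0 ∧ c = 0 then zchar m (dot3 (a, b, c) δ) else 0)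
      = (if a ≠ 0 then zchar m (a * δ.1) else 0) *
        ((if b ≠ 0 then zchar m (b * δ.2.1) else 0) *
          (if c = 0 then zchar m (c * δ.2.2) else 0)) := by
    intro a b c
    by_cases ha : a = 0 <;> by_cases hb : b = 0 <;> by_cases hc : c = 0 <;>
      simp [ha, hb, hc, dot3, zchar_add, zchar_zero, mul_assoc]
  simp only [key, ← Finset.mul_sum, ← Finset.sum_mul]
  rw [sum_if_zchar, sum_if_zchar, sum_if_eq_zero_zchar]
  ring

lemma filter_sum_znn (m : ℕ) [NeZero m] (δ : ZMod m × ZMod m × ZMod m) :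
    ∑ x ∈ Finset.univ.filter
        (fun g : ZMod m × ZMod m × ZMod m => g.1 = 0 ∧ g.2.1 ≠ 0 ∧ g.2.2 ≠ 0),
      zchar m (dot3 x δ) = eC m δ.2.1 * eC m δ.2.2 := by
  rw [Finset.sum_filter, Fintype.sum_prod_type]
  simp only [Fintype.sum_prod_type]
  have key : ∀ a b c : ZMod m,
      (if a = 0 ∧ b ≠ 0 ∧ c ≠ 0 then zchar m (dot3 (a, b, c) δ) else 0)
      = (if a = 0 then zchar m (a * δ.1) else 0) *
        ((if b ≠ 0 then zchar m (b * δ.2.1) else 0) *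
          (if c ≠ 0 then zchar m (c * δ.2.2) else 0)) := by
    intro a b c
    by_cases ha : a = 0 <;> by_cases hb : b = 0 <;> by_cases hc : c = 0 <;>
      simp [ha, hb, hc, dot3, zchar_add, zchar_zero, mul_assoc]
  simp only [key, ← Finset.mul_sum, ← Finset.sum_mul]
  rw [sum_if_zchar, sum_if_zchar, sum_if_eq_zero_zchar]
  ring

lemma filter_sum_nzn (m : ℕ) [NeZero m] (δ : ZMod m × ZMod m × ZMod m) :
    ∑ x ∈ Finset.univ.filter
        (fun g : ZMod m × ZMod m × ZMod m => g.1 ≠ 0 ∧ g.2.1 = 0 ∧ g.2.2 ≠ 0),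
      zchar m (dot3 x δ) = eC m δ.1 * eC m δ.2.2 := by
  rw [Finset.sum_filter, Fintype.sum_prod_type]
  simp only [Fintype.sum_prod_type]
  have key : ∀ a b c : ZMod m,
      (if a ≠ 0 ∧ b = 0 ∧ c ≠ 0 then zchar m (dot3 (a, b, c) δ) else 0)
      = (if a ≠ 0 then zchar m (a * δ.1) else 0) *
        ((if b = 0 then zchar m (b * δ.2.1) else 0) *
          (if c ≠ 0 then zchar m (c * δ.2.2) else 0)) := by
    intro a b c
    by_cases ha : a = 0 <;> by_cases hb : b = 0 <;> by_cases hc : c = 0 <;>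
      simp [ha, hb, hc, dot3, zchar_add, zchar_zero, mul_assoc]
  simp only [key, ← Finset.mul_sum, ← Finset.sum_mul]
  rw [sum_if_zchar, sum_if_zchar, sum_if_eq_zero_zchar]
  ring

lemma filter_or_sum (m : ℕ) [NeZero m] (P Q : ZMod m × ZMod m × ZMod m → Prop)
    [DecidablePred P] [DecidablePred Q] (hPQ : ∀ g, ¬ (P g ∧ Q g))
    (f : ZMod m × ZMod m × ZMod m → ℂ) :
    ∑ x ∈ Finset.univ.filter (fun g => P g ∨ Q g), f x
      = (∑ x ∈ Finset.univ.filter P, f x) + ∑ x ∈ Finset.univ.filter Q, f x := by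
  simp only [Finset.sum_filter]
  rw [← Finset.sum_add_distrib]
  refine Finset.sum_congr rfl fun g _ => ?_
  by_cases hP : P g <;> by_cases hQ : Q g
  · exact absurd ⟨hP, hQ⟩ (hPQ g)
  all_goals simp [hP, hQ]

lemma core {Ω : Type*} [MeasurableSpace Ω] (μ : Measure Ω) [IsProbabilityMeasure μ]
    {I : Type*} [Fintype I] [DecidableEq I] (X : I → Ω → ℝ)
    (hindep : iIndepFun X μ)
    (hint : ∀ i, Integrable (X i) μ) (hint2 : ∀ i, Integrable (fun ω => X i ω ^ 2) μ)
    (μ0 ν0 : ℝ) (hmean : ∀ i, ∫ ω, X i ω ∂μ = μ0) (hmom : ∀ i, ∫ ω, X i ω ^ 2 ∂μ = ν0)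
    (C D : I → ℂ) :
    ∫ ω, (∑ k, (X k ω : ℂ) * C k) * star (∑ l, (X l ω : ℂ) * D l) ∂μ
      = ((μ0 ^ 2 : ℝ) : ℂ) * ((∑ k, C k) * star (∑ l, D l))
        + ((ν0 - μ0 ^ 2 : ℝ) : ℂ) * ∑ k, C k * star (D k) := by
  classical
  have hprod_int : ∀ k l : I, Integrable (fun ω => X k ω * X l ω) μ := by
    intro k l
    by_cases h : k = l
    · subst h; simpa [sq] using hint2 k
    · exact (hindep.indepFun h).integrable_mul (hint k) (hint l)
  have hEkl : ∀ k l : I, ∫ ω, X k ω * X l ω ∂μ = if k = l then ν0 else μ0 ^ 2 := by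
    intro k l
    by_cases h : k = l
    · subst h; rw [if_pos rfl, ← hmom k]; simp [sq]
    · rw [if_neg h]
      have h2 : ∫ ω, X k ω * X l ω ∂μ = (∫ ω, X k ω ∂μ) * ∫ ω, X l ω ∂μ :=
        IndepFun.integral_fun_mul_eq_mul_integral (hindep.indepFun h) (hint k).aestronglyMeasurable
          (hint l).aestronglyMeasurable
      rw [h2, hmean k, hmean l, sq]
  have hpt : ∀ ω, (∑ k, (X k ω : ℂ) * C k) * star (∑ l, (X l ω : ℂ) * D l)
      = ∑ p : I × I, ((X p.1 ω * X p.2 ω : ℝ) : ℂ) * (C p.1 * star (D p.2)) := by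
    intro ω
    rw [star_sum, Finset.sum_mul_sum,
      Fintype.sum_prod_type (f := fun p : I × I =>
        ((X p.1 ω * X p.2 ω : ℝ) : ℂ) * (C p.1 * star (D p.2)))]
    refine Finset.sum_congr rfl fun k _ => Finset.sum_congr rfl fun l _ => ?_
    dsimp only
    rw [star_mul']
    rw [show star ((X l ω : ℝ) : ℂ) = ((X l ω : ℝ) : ℂ) from Complex.conj_ofReal _]
    push_cast
    ring
  simp only [hpt]
  rw [integral_finset_sum _ (fun p _ => ((hprod_int p.1 p.2).ofReal.mul_const _))]
  have hterm : ∀ p : I × I, ∫ ω, ((X p.1 ω * X p.2 ω : ℝ) : ℂ) * (C p.1 * star (D p.2)) ∂μ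
      = ((if p.1 = p.2 then ν0 else μ0 ^ 2 : ℝ) : ℂ) * (C p.1 * star (D p.2)) := by
    intro p
    rw [integral_mul_const]
    rw [show (∫ ω, ((X p.1 ω * X p.2 ω : ℝ) : ℂ) ∂μ)
        = (((∫ ω, X p.1 ω * X p.2 ω ∂μ : ℝ)) : ℂ) from integral_ofReal]
    rw [hEkl p.1 p.2]
  simp only [hterm]
  rw [Fintype.sum_prod_type]
  have hsplit : ∀ k l : I, ((if k = l then ν0 else μ0 ^ 2 : ℝ) : ℂ) * (C k * star (D l))
      = ((μ0 ^ 2 : ℝ) : ℂ) * (C k * star (D l))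
        + (if k = l then ((ν0 - μ0 ^ 2 : ℝ) : ℂ) * (C l * star (D l)) else 0) := by
    intro k l
    by_cases h : k = l
    · subst h; simp only [if_pos rfl]; push_cast; ring
    · simp [h]
  simp only [hsplit, Finset.sum_add_distrib]
  congr 1
  · rw [star_sum, Finset.sum_mul_sum, Finset.mul_sum]
    refine Finset.sum_congr rfl fun k _ => ?_
    rw [Finset.mul_sum]
  · simp only [Finset.sum_ite_eq, Finset.mem_univ, if_true]
    rw [Finset.mul_sum]


/-! ### Signal machinery -/

lemma fin2_eq_one (x : Fin 2) (h : x ≠ 0) : x = 1 := by fin_cases x <;> simp_all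

def ptA (m : ℕ) (k : Fin 2 × Fin (m - 1) × Fin (m - 1)) : ZMod m × ZMod m × ZMod m :=
  if k.1 = 0 then (-(emb m k.2.1), emb m k.2.2, 0) else (0, -(emb m k.2.1), emb m k.2.2)

def ptB (m : ℕ) (k : Fin 2 × Fin (m - 1) × Fin (m - 1)) : ZMod m × ZMod m × ZMod m :=
  if k.1 = 0 then (0, -(emb m k.2.1), emb m k.2.2) else (emb m k.2.2, 0, -(emb m k.2.1))

lemma aSig_eq (m : ℕ) (A1 A2 : Fin (m - 1) → Fin (m - 1) → ℝ)
    (g : ZMod m × ZMod m × ZMod m) :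
    aSig m A1 A2 g = ∑ k : Fin 2 × Fin (m - 1) × Fin (m - 1),
      (if g = ptA m k then (if k.1 = 0 then A1 k.2.1 k.2.2 else A2 k.2.1 k.2.2) else 0) := by
  rw [aSig, Fintype.sum_prod_type, Fin.sum_univ_two]
  simp only [Fintype.sum_prod_type]
  norm_num [ptA, show (1 : Fin 2) ≠ 0 from by decide]

lemma bSig_eq (m : ℕ) (B1 B2 : Fin (m - 1) → Fin (m - 1) → ℝ)
    (g : ZMod m × ZMod m × ZMod m) :
    bSig m B1 B2 g = ∑ k : Fin 2 × Fin (m - 1) × Fin (m - 1),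
      (if g = ptB m k then (if k.1 = 0 then B1 k.2.1 k.2.2 else B2 k.2.1 k.2.2) else 0) := by
  rw [bSig, Fintype.sum_prod_type, Fin.sum_univ_two]
  simp only [Fintype.sum_prod_type]
  norm_num [ptB, show (1 : Fin 2) ≠ 0 from by decide]

lemma ftC_expand (m : ℕ) [NeZero m] {I : Type*} [Fintype I]
    (p : I → ZMod m × ZMod m × ZMod m) (c : I → ℝ) (ξ : ZMod m × ZMod m × ZMod m) :
    ftC m (fun g => ((∑ k, if g = p k then c k else 0 : ℝ) : ℂ)) ξ
      = (((m : ℝ) ^ ((-3 : ℝ) / 2) : ℝ) : ℂ) * ∑ k, (c k : ℂ) * zchar m (dot3 (p k) ξ) := by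
  rw [ftC]
  congr 1
  have h1 : ∀ g : ZMod m × ZMod m × ZMod m,
      ((∑ k, if g = p k then c k else 0 : ℝ) : ℂ) * zchar m (dot3 g ξ)
        = ∑ k, (if g = p k then (c k : ℂ) * zchar m (dot3 g ξ) else 0) := by
    intro g
    rw [Complex.ofReal_sum, Finset.sum_mul]
    refine Finset.sum_congr rfl fun k _ => ?_
    by_cases h : g = p k <;> simp [h]
  simp only [h1]
  rw [Finset.sum_comm]
  refine Finset.sum_congr rfl fun k _ => ?_
  rw [Finset.sum_ite_eq' Finset.univ (p k) (fun g => (c k : ℂ) * zchar m (dot3 g ξ))]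
  simp

lemma dot3_sub (m : ℕ) (g ξ η : ZMod m × ZMod m × ZMod m) :
    dot3 g ξ + -(dot3 g η) = dot3 g (ξ - η) := by
  simp only [dot3, Prod.fst_sub, Prod.snd_sub]
  ring

lemma main_eq {Ω : Type*} [MeasurableSpace Ω] (μ : Measure Ω) [IsProbabilityMeasure μ]
    (m : ℕ) [NeZero m] {I : Type*} [Fintype I] [DecidableEq I]
    (X : I → Ω → ℝ) (hindep : iIndepFun X μ)
    (hint : ∀ i, Integrable (X i) μ) (hint2 : ∀ i, Integrable (fun ω => X i ω ^ 2) μ)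
    (μ0 ν0 : ℝ) (hmean : ∀ i, ∫ ω, X i ω ∂μ = μ0) (hmom : ∀ i, ∫ ω, X i ω ^ 2 ∂μ = ν0)
    (p : I → ZMod m × ZMod m × ZMod m) (ξ η δ : ZMod m × ZMod m × ZMod m) (hδ : δ = ξ - η)
    (h2ξ : ∑ k, zchar m (dot3 (p k) ξ) = 2) (h2η : ∑ k, zchar m (dot3 (p k) η) = 2) :
    ∫ ω, (((((m : ℝ) ^ ((-3 : ℝ) / 2) : ℝ)) : ℂ) * ∑ k, (X k ω : ℂ) * zchar m (dot3 (p k) ξ)) *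
        star (((((m : ℝ) ^ ((-3 : ℝ) / 2) : ℝ)) : ℂ) * ∑ l, (X l ω : ℂ) * zchar m (dot3 (p l) η)) ∂μ
      = ((4 * μ0 ^ 2 / (m : ℝ) ^ 3 : ℝ) : ℂ)
        + (((ν0 - μ0 ^ 2) / (m : ℝ) ^ 3 : ℝ) : ℂ) * ∑ k, zchar m (dot3 (p k) δ) := by
  have hm0 : (0 : ℝ) < m := Nat.cast_pos.2 (Nat.pos_of_ne_zero (NeZero.ne m))
  have hcst : ((m : ℝ) ^ ((-3 : ℝ) / 2)) * ((m : ℝ) ^ ((-3 : ℝ) / 2)) = ((m : ℝ) ^ (3 : ℕ))⁻¹ := by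
    rw [← Real.rpow_add hm0, show ((-3 : ℝ) / 2 + (-3 : ℝ) / 2) = -3 by norm_num,
      Real.rpow_neg hm0.le]
    congr 1
    rw [show ((3 : ℝ)) = ((3 : ℕ) : ℝ) by norm_num, Real.rpow_natCast]
  have hpt : ∀ ω : Ω,
      (((((m : ℝ) ^ ((-3 : ℝ) / 2) : ℝ)) : ℂ) * ∑ k, (X k ω : ℂ) * zchar m (dot3 (p k) ξ)) *
        star (((((m : ℝ) ^ ((-3 : ℝ) / 2) : ℝ)) : ℂ) * ∑ l, (X l ω : ℂ) * zchar m (dot3 (p l) η))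
      = ((((m : ℝ) ^ (3 : ℕ))⁻¹ : ℝ) : ℂ) *
          ((∑ k, (X k ω : ℂ) * zchar m (dot3 (p k) ξ)) *
            star (∑ l, (X l ω : ℂ) * zchar m (dot3 (p l) η))) := by
    intro ω
    rw [star_mul', show star ((((m : ℝ) ^ ((-3 : ℝ) / 2) : ℝ)) : ℂ)
      = ((((m : ℝ) ^ ((-3 : ℝ) / 2) : ℝ)) : ℂ) from Complex.conj_ofReal _]
    rw [← hcst]
    push_cast
    ring
  simp only [hpt]
  rw [integral_const_mul]
  rw [core μ X hindep hint hint2 μ0 ν0 hmean hmom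
    (fun k => zchar m (dot3 (p k) ξ)) (fun l => zchar m (dot3 (p l) η))]
  rw [h2ξ, h2η]
  have hCD : ∑ k, zchar m (dot3 (p k) ξ) * star (zchar m (dot3 (p k) η))
      = ∑ k, zchar m (dot3 (p k) δ) := by
    refine Finset.sum_congr rfl fun k _ => ?_
    rw [zchar_star, ← zchar_add, dot3_sub, ← hδ]
  rw [hCD, show star (2 : ℂ) = 2 from by norm_num]
  have hm3 : ((m : ℝ) : ℂ) ^ (3 : ℕ) ≠ 0 := pow_ne_zero _ (by exact_mod_cast hm0.ne')
  push_cast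
  field_simp
  ring

lemma var_nonneg {Ω : Type*} [MeasurableSpace Ω] (μ : Measure Ω) [IsProbabilityMeasure μ]
    (f : Ω → ℝ) (h1 : Integrable f μ) (h2 : Integrable (fun ω => f ω ^ 2) μ) :
    (∫ ω, f ω ∂μ) ^ 2 ≤ ∫ ω, f ω ^ 2 ∂μ := by
  set a := ∫ ω, f ω ∂μ with ha
  have key : 0 ≤ ∫ ω, (f ω - a) ^ 2 ∂μ := integral_nonneg fun ω => sq_nonneg _
  have hrw : (fun ω => (f ω - a) ^ 2) = fun ω => (f ω ^ 2 - (2 * a) * f ω) + a ^ 2 := by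
    funext ω; ring
  rw [hrw] at key
  have hsub : Integrable (fun ω => f ω ^ 2 - 2 * a * f ω) μ := h2.sub (h1.const_mul (2 * a))
  rw [integral_add hsub (integrable_const _),
    integral_sub h2 (h1.const_mul (2 * a)), integral_const_mul, integral_const] at key
  simp only [measure_univ, ENNReal.toReal_one, probReal_univ, one_smul, ← ha] at key
  nlinarith [key]

lemma eR_abs (m : ℕ) (hm : 2 ≤ m) (s : ZMod m) : |eR m s| ≤ (m : ℝ) - 1 := by
  have hM : (2 : ℝ) ≤ (m : ℝ) := by exact_mod_cast hm
  unfold eR; split_ifs <;> rw [abs_le] <;> constructor <;> linarith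

lemma eR_ne (m : ℕ) (s : ZMod m) (h : s ≠ 0) : eR m s = -1 := if_neg h

lemma pair_bound (m : ℕ) (hm : 2 ≤ m) (s t : ZMod m) (h : ¬(s = 0 ∧ t = 0)) :
    |eR m s * eR m t| ≤ (m : ℝ) - 1 := by
  have hM : (2 : ℝ) ≤ (m : ℝ) := by exact_mod_cast hm
  rcases not_and_or.1 h with h | h
  · rw [abs_mul, eR_ne m s h]
    simpa using eR_abs m hm t
  · rw [abs_mul, eR_ne m t h]
    simpa using eR_abs m hm s

lemma qa_bound (m : ℕ) (hm : 2 ≤ m) (δ : ZMod m × ZMod m × ZMod m) :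
    |eR m δ.1 * eR m δ.2.1 + eR m δ.2.1 * eR m δ.2.2| ≤ (m : ℝ) ^ 3 * qa m δ := by
  have hM : (2 : ℝ) ≤ (m : ℝ) := by exact_mod_cast hm
  have hM0 : (0 : ℝ) < (m : ℝ) := by linarith
  rw [qa]
  split_ifs with hc1 hc2
  · rw [show (m : ℝ) ^ 3 * (2 / (m : ℝ)) = 2 * (m : ℝ) ^ 2 from by field_simp]
    calc |eR m δ.1 * eR m δ.2.1 + eR m δ.2.1 * eR m δ.2.2|
        ≤ |eR m δ.1 * eR m δ.2.1| + |eR m δ.2.1 * eR m δ.2.2| := abs_add_le _ _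
      _ ≤ ((m : ℝ) - 1) * ((m : ℝ) - 1) + ((m : ℝ) - 1) * ((m : ℝ) - 1) := by
          rw [abs_mul, abs_mul]
          gcongr <;>
            first
              | exact abs_nonneg _
              | exact eR_abs m hm _
              | linarith
      _ ≤ 2 * (m : ℝ) ^ 2 := by nlinarith
  · obtain ⟨n1, n2, n3⟩ := hc2
    rw [eR_ne m _ n1, eR_ne m _ n2, eR_ne m _ n3,
      show (m : ℝ) ^ 3 * (2 / (m : ℝ) ^ 3) = 2 from by field_simp]
    norm_num
  · rcases not_or.1 hc1 with ⟨h12, h23⟩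
    rw [show (m : ℝ) ^ 3 * (2 / (m : ℝ) ^ 2) = 2 * (m : ℝ) from by field_simp]
    calc |eR m δ.1 * eR m δ.2.1 + eR m δ.2.1 * eR m δ.2.2|
        ≤ |eR m δ.1 * eR m δ.2.1| + |eR m δ.2.1 * eR m δ.2.2| := abs_add_le _ _
      _ ≤ ((m : ℝ) - 1) + ((m : ℝ) - 1) :=
          add_le_add (pair_bound m hm _ _ h12) (pair_bound m hm _ _ h23)
      _ ≤ 2 * (m : ℝ) := by linarith

lemma qb_bound (m : ℕ) (hm : 2 ≤ m) (δ : ZMod m × ZMod m × ZMod m) :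
    |eR m δ.2.1 * eR m δ.2.2 + eR m δ.1 * eR m δ.2.2| ≤ (m : ℝ) ^ 3 * qb m δ := by
  have hM : (2 : ℝ) ≤ (m : ℝ) := by exact_mod_cast hm
  have hM0 : (0 : ℝ) < (m : ℝ) := by linarith
  rw [qb]
  split_ifs with hc1 hc2
  · rw [show (m : ℝ) ^ 3 * (2 / (m : ℝ)) = 2 * (m : ℝ) ^ 2 from by field_simp]
    calc |eR m δ.2.1 * eR m δ.2.2 + eR m δ.1 * eR m δ.2.2|
        ≤ |eR m δ.2.1 * eR m δ.2.2| + |eR m δ.1 * eR m δ.2.2| := abs_add_le _ _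
      _ ≤ ((m : ℝ) - 1) * ((m : ℝ) - 1) + ((m : ℝ) - 1) * ((m : ℝ) - 1) := by
          rw [abs_mul, abs_mul]
          gcongr <;>
            first
              | exact abs_nonneg _
              | exact eR_abs m hm _
              | linarith
      _ ≤ 2 * (m : ℝ) ^ 2 := by nlinarith
  · obtain ⟨n1, n2, n3⟩ := hc2
    rw [eR_ne m _ n1, eR_ne m _ n2, eR_ne m _ n3,
      show (m : ℝ) ^ 3 * (2 / (m : ℝ) ^ 3) = 2 from by field_simp]
    norm_num
  · rcases not_or.1 hc1 with ⟨h23, h31⟩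
    rw [show (m : ℝ) ^ 3 * (2 / (m : ℝ) ^ 2) = 2 * (m : ℝ) from by field_simp]
    calc |eR m δ.2.1 * eR m δ.2.2 + eR m δ.1 * eR m δ.2.2|
        ≤ |eR m δ.2.1 * eR m δ.2.2| + |eR m δ.1 * eR m δ.2.2| := abs_add_le _ _
      _ ≤ ((m : ℝ) - 1) + ((m : ℝ) - 1) := by
          refine add_le_add (pair_bound m hm _ _ ?_) (pair_bound m hm _ _ ?_)
          · exact h23
          · intro hh; exact h31 ⟨hh.2, hh.1⟩
      _ ≤ 2 * (m : ℝ) := by linarith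


lemma sum_ptA (m : ℕ) [NeZero m] (τ : ZMod m × ZMod m × ZMod m) :
    ∑ k : Fin 2 × Fin (m - 1) × Fin (m - 1), zchar m (dot3 (ptA m k) τ)
      = eC m τ.1 * eC m τ.2.1 + eC m τ.2.1 * eC m τ.2.2 := by
  rw [Fintype.sum_prod_type, Fin.sum_univ_two]
  simp only [Fintype.sum_prod_type]
  congr 1
  · rw [← double_sum m τ.1 τ.2.1]
    refine Finset.sum_congr rfl fun i _ => Finset.sum_congr rfl fun j _ => ?_
    congr 1
    show dot3 (ptA m (0, i, j)) τ = _
    simp [ptA, dot3]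
  · rw [← double_sum m τ.2.1 τ.2.2]
    refine Finset.sum_congr rfl fun i _ => Finset.sum_congr rfl fun j _ => ?_
    congr 1
    show dot3 (ptA m (1, i, j)) τ = _
    simp [ptA, dot3, show (1 : Fin 2) ≠ 0 from by decide]

lemma sum_ptB (m : ℕ) [NeZero m] (τ : ZMod m × ZMod m × ZMod m) :
    ∑ k : Fin 2 × Fin (m - 1) × Fin (m - 1), zchar m (dot3 (ptB m k) τ)
      = eC m τ.2.1 * eC m τ.2.2 + eC m τ.1 * eC m τ.2.2 := by
  rw [Fintype.sum_prod_type, Fin.sum_univ_two]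
  simp only [Fintype.sum_prod_type]
  congr 1
  · rw [← double_sum m τ.2.1 τ.2.2]
    refine Finset.sum_congr rfl fun i _ => Finset.sum_congr rfl fun j _ => ?_
    congr 1
    show dot3 (ptB m (0, i, j)) τ = _
    simp [ptB, dot3]
  · rw [← double_sum' m τ.1 τ.2.2]
    refine Finset.sum_congr rfl fun i _ => Finset.sum_congr rfl fun j _ => ?_
    congr 1
    show dot3 (ptB m (1, i, j)) τ = _
    simp [ptB, dot3, show (1 : Fin 2) ≠ 0 from by decide]

/-- **Low Correlation Lemma.** For matrices with i.i.d. entries from a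
distribution with mean `μ_A`, second moment `ν_A` and variance `σ_A² = ν_A - μ_A²`,
embedded as the signal `a` on `X₁ ∪ X₂ ⊆ (ℤ_m)³`, and frequencies `ξ, η` with all
coordinates in `{r,…,m-1}`, the correlation `E[â(ξ) conj(â(η))]` equals
`4μ_A²/m³ + (σ_A²/m³) Σ_{x∈X₁∪X₂} ω^{x·δ}` where `δ = ξ - η`; in particular it depends
only on `δ` and is bounded by `4μ_A²/m³ + σ_A² q_a(δ)`. The analogous claims hold for
the `b`-signal supported on `X₂ ∪ X₃`. -/
theorem statement6 (m r : ℕ) [NeZero m] (hm : 2 ≤ m) (hr1 : 1 ≤ r) (hrm : r ≤ m)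
    {Ω : Type*} [MeasurableSpace Ω] (μ : Measure Ω) [IsProbabilityMeasure μ]
    (X Y : Fin 2 × Fin (m - 1) × Fin (m - 1) → Ω → ℝ)
    (μA νA μB νB : ℝ)
    (hXmeas : ∀ i, Measurable (X i)) (hYmeas : ∀ i, Measurable (Y i))
    (hXindep : iIndepFun X μ)
    (hYindep : iIndepFun Y μ)
    (hXid : ∀ i j, IdentDistrib (X i) (X j) μ μ)
    (hYid : ∀ i j, IdentDistrib (Y i) (Y j) μ μ)
    (hXint : ∀ i, Integrable (X i) μ) (hXint2 : ∀ i, Integrable (fun ω => X i ω ^ 2) μ)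
    (hYint : ∀ i, Integrable (Y i) μ) (hYint2 : ∀ i, Integrable (fun ω => Y i ω ^ 2) μ)
    (hXmean : ∀ i, ∫ ω, X i ω ∂μ = μA) (hXmom : ∀ i, ∫ ω, X i ω ^ 2 ∂μ = νA)
    (hYmean : ∀ i, ∫ ω, Y i ω ∂μ = μB) (hYmom : ∀ i, ∫ ω, Y i ω ^ 2 ∂μ = νB)
    (ξ η : ZMod m × ZMod m × ZMod m)
    (hξ : r ≤ ξ.1.val ∧ r ≤ ξ.2.1.val ∧ r ≤ ξ.2.2.val)
    (hη : r ≤ η.1.val ∧ r ≤ η.2.1.val ∧ r ≤ η.2.2.val)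
    (δ : ZMod m × ZMod m × ZMod m) (hδ : δ = ξ - η)
    (ftA ftB : ZMod m × ZMod m × ZMod m → Ω → ℂ)
    (hftA : ∀ ζ ω, ftA ζ ω = ftC m
      (fun g => ((aSig m (fun i j => X (0, i, j) ω) (fun i j => X (1, i, j) ω) g : ℝ) : ℂ)) ζ)
    (hftB : ∀ ζ ω, ftB ζ ω = ftC m
      (fun g => ((bSig m (fun i j => Y (0, i, j) ω) (fun i j => Y (1, i, j) ω) g : ℝ) : ℂ)) ζ) :
    (∫ ω, ftA ξ ω * star (ftA η ω) ∂μ =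
      ((4 * μA ^ 2 / (m : ℝ) ^ 3 : ℝ) : ℂ) +
        (((νA - μA ^ 2) / (m : ℝ) ^ 3 : ℝ) : ℂ) *
          ∑ x ∈ Finset.univ.filter
              (fun g : ZMod m × ZMod m × ZMod m =>
                (g.1 ≠ 0 ∧ g.2.1 ≠ 0 ∧ g.2.2 = 0) ∨ (g.1 = 0 ∧ g.2.1 ≠ 0 ∧ g.2.2 ≠ 0)),
            zchar m (dot3 x δ)) ∧
    ‖∫ ω, ftA ξ ω * star (ftA η ω) ∂μ‖ ≤
      4 * μA ^ 2 / (m : ℝ) ^ 3 + (νA - μA ^ 2) * qa m δ ∧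
    (∫ ω, ftB ξ ω * star (ftB η ω) ∂μ =
      ((4 * μB ^ 2 / (m : ℝ) ^ 3 : ℝ) : ℂ) +
        (((νB - μB ^ 2) / (m : ℝ) ^ 3 : ℝ) : ℂ) *
          ∑ x ∈ Finset.univ.filter
              (fun g : ZMod m × ZMod m × ZMod m =>
                (g.1 = 0 ∧ g.2.1 ≠ 0 ∧ g.2.2 ≠ 0) ∨ (g.1 ≠ 0 ∧ g.2.1 = 0 ∧ g.2.2 ≠ 0)),
            zchar m (dot3 x δ)) ∧
    ‖∫ ω, ftB ξ ω * star (ftB η ω) ∂μ‖ ≤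
      4 * μB ^ 2 / (m : ℝ) ^ 3 + (νB - μB ^ 2) * qb m δ := by
  have hmR : (2 : ℝ) ≤ (m : ℝ) := by exact_mod_cast hm
  have hm0 : (0 : ℝ) < (m : ℝ) := by linarith
  have hm3 : (0 : ℝ) < (m : ℝ) ^ 3 := by positivity
  have i0 : Fin (m - 1) := ⟨0, by omega⟩
  have hne : ∀ s : ZMod m, r ≤ s.val → s ≠ 0 := by
    intro s hs h
    rw [h, ZMod.val_zero] at hs
    omega
  have hξ1 := hne ξ.1 hξ.1
  have hξ2 := hne ξ.2.1 hξ.2.1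
  have hξ3 := hne ξ.2.2 hξ.2.2
  have hη1 := hne η.1 hη.1
  have hη2 := hne η.2.1 hη.2.1
  have hη3 := hne η.2.2 hη.2.2
  have hvarA : 0 ≤ νA - μA ^ 2 := by
    have h := var_nonneg μ (X (0, i0, i0)) (hXint _) (hXint2 _)
    rw [hXmean, hXmom] at h
    linarith
  have hvarB : 0 ≤ νB - μB ^ 2 := by
    have h := var_nonneg μ (Y (0, i0, i0)) (hYint _) (hYint2 _)
    rw [hYmean, hYmom] at h
    linarith
  -- pointwise expansions
  have hAexp : ∀ ζ ω, ftA ζ ω = (((m : ℝ) ^ ((-3 : ℝ) / 2) : ℝ) : ℂ) *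
      ∑ k : Fin 2 × Fin (m - 1) × Fin (m - 1), (X k ω : ℂ) * zchar m (dot3 (ptA m k) ζ) := by
    intro ζ ω
    rw [hftA]
    have hfun : (fun g => ((aSig m (fun i j => X (0, i, j) ω) (fun i j => X (1, i, j) ω) g : ℝ) : ℂ))
        = fun g => ((∑ k : Fin 2 × Fin (m - 1) × Fin (m - 1),
            if g = ptA m k then X k ω else 0 : ℝ) : ℂ) := by
      funext g
      congr 1
      rw [aSig_eq]
      refine Finset.sum_congr rfl fun k _ => ?_
      congr 1
      by_cases h : k.1 = 0
      · rw [if_pos h, ← h]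
      · rw [if_neg h, ← fin2_eq_one k.1 h]
    rw [hfun, ftC_expand]
  have hBexp : ∀ ζ ω, ftB ζ ω = (((m : ℝ) ^ ((-3 : ℝ) / 2) : ℝ) : ℂ) *
      ∑ k : Fin 2 × Fin (m - 1) × Fin (m - 1), (Y k ω : ℂ) * zchar m (dot3 (ptB m k) ζ) := by
    intro ζ ω
    rw [hftB]
    have hfun : (fun g => ((bSig m (fun i j => Y (0, i, j) ω) (fun i j => Y (1, i, j) ω) g : ℝ) : ℂ))
        = fun g => ((∑ k : Fin 2 × Fin (m - 1) × Fin (m - 1),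
            if g = ptB m k then Y k ω else 0 : ℝ) : ℂ) := by
      funext g
      congr 1
      rw [bSig_eq]
      refine Finset.sum_congr rfl fun k _ => ?_
      congr 1
      by_cases h : k.1 = 0
      · rw [if_pos h, ← h]
      · rw [if_neg h, ← fin2_eq_one k.1 h]
    rw [hfun, ftC_expand]
  -- character sums at the frequencies
  have h2Aξ : ∑ k : Fin 2 × Fin (m - 1) × Fin (m - 1), zchar m (dot3 (ptA m k) ξ) = 2 := by
    rw [sum_ptA]; simp [eC, hξ1, hξ2, hξ3]; norm_num
  have h2Aη : ∑ k : Fin 2 × Fin (m - 1) × Fin (m - 1), zchar m (dot3 (ptA m k) η) = 2 := by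
    rw [sum_ptA]; simp [eC, hη1, hη2, hη3]; norm_num
  have h2Bξ : ∑ k : Fin 2 × Fin (m - 1) × Fin (m - 1), zchar m (dot3 (ptB m k) ξ) = 2 := by
    rw [sum_ptB]; simp [eC, hξ1, hξ2, hξ3]; norm_num
  have h2Bη : ∑ k : Fin 2 × Fin (m - 1) × Fin (m - 1), zchar m (dot3 (ptB m k) η) = 2 := by
    rw [sum_ptB]; simp [eC, hη1, hη2, hη3]; norm_num
  -- main equalities
  have hEqA : ∫ ω, ftA ξ ω * star (ftA η ω) ∂μ
      = ((4 * μA ^ 2 / (m : ℝ) ^ 3 : ℝ) : ℂ)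
        + (((νA - μA ^ 2) / (m : ℝ) ^ 3 : ℝ) : ℂ)
          * ∑ k : Fin 2 × Fin (m - 1) × Fin (m - 1), zchar m (dot3 (ptA m k) δ) := by
    simp only [hAexp]
    exact main_eq μ m X hXindep hXint hXint2 μA νA hXmean hXmom (ptA m) ξ η δ hδ h2Aξ h2Aη
  have hEqB : ∫ ω, ftB ξ ω * star (ftB η ω) ∂μ
      = ((4 * μB ^ 2 / (m : ℝ) ^ 3 : ℝ) : ℂ)
        + (((νB - μB ^ 2) / (m : ℝ) ^ 3 : ℝ) : ℂ)
          * ∑ k : Fin 2 × Fin (m - 1) × Fin (m - 1), zchar m (dot3 (ptB m k) δ) := by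
    simp only [hBexp]
    exact main_eq μ m Y hYindep hYint hYint2 μB νB hYmean hYmom (ptB m) ξ η δ hδ h2Bξ h2Bη
  -- filter sums
  have hFA : ∑ x ∈ Finset.univ.filter
      (fun g : ZMod m × ZMod m × ZMod m =>
        (g.1 ≠ 0 ∧ g.2.1 ≠ 0 ∧ g.2.2 = 0) ∨ (g.1 = 0 ∧ g.2.1 ≠ 0 ∧ g.2.2 ≠ 0)),
      zchar m (dot3 x δ)
      = ∑ k : Fin 2 × Fin (m - 1) × Fin (m - 1), zchar m (dot3 (ptA m k) δ) := by
    rw [sum_ptA, filter_or_sum m _ _ (fun g hg => hg.1.1 hg.2.1) _,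
      filter_sum_nnz, filter_sum_znn]
  have hFB : ∑ x ∈ Finset.univ.filter
      (fun g : ZMod m × ZMod m × ZMod m =>
        (g.1 = 0 ∧ g.2.1 ≠ 0 ∧ g.2.2 ≠ 0) ∨ (g.1 ≠ 0 ∧ g.2.1 = 0 ∧ g.2.2 ≠ 0)),
      zchar m (dot3 x δ)
      = ∑ k : Fin 2 × Fin (m - 1) × Fin (m - 1), zchar m (dot3 (ptB m k) δ) := by
    rw [sum_ptB, filter_or_sum m _ _ (fun g hg => hg.2.1 hg.1.1) _,
      filter_sum_znn, filter_sum_nzn]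
  -- real forms of the delta sums
  have hSA : ∑ k : Fin 2 × Fin (m - 1) × Fin (m - 1), zchar m (dot3 (ptA m k) δ)
      = ((eR m δ.1 * eR m δ.2.1 + eR m δ.2.1 * eR m δ.2.2 : ℝ) : ℂ) := by
    rw [sum_ptA, eC_eq_eR, eC_eq_eR, eC_eq_eR]
    push_cast
    ring
  have hSB : ∑ k : Fin 2 × Fin (m - 1) × Fin (m - 1), zchar m (dot3 (ptB m k) δ)
      = ((eR m δ.2.1 * eR m δ.2.2 + eR m δ.1 * eR m δ.2.2 : ℝ) : ℂ) := by
    rw [sum_ptB, eC_eq_eR, eC_eq_eR, eC_eq_eR]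
    push_cast
    ring
  have hqa0 : 0 ≤ qa m δ := by rw [qa]; split_ifs <;> positivity
  have hqb0 : 0 ≤ qb m δ := by rw [qb]; split_ifs <;> positivity
  refine ⟨by rw [hEqA, hFA], ?_, by rw [hEqB, hFB], ?_⟩
  · rw [hEqA, hSA, ← Complex.ofReal_mul, ← Complex.ofReal_add, Complex.norm_real, Real.norm_eq_abs]
    set SR := eR m δ.1 * eR m δ.2.1 + eR m δ.2.1 * eR m δ.2.2 with hSRdef
    have habs : |SR| ≤ (m : ℝ) ^ 3 * qa m δ := qa_bound m hm δ
    calc |4 * μA ^ 2 / (m : ℝ) ^ 3 + (νA - μA ^ 2) / (m : ℝ) ^ 3 * SR|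
        ≤ 4 * μA ^ 2 / (m : ℝ) ^ 3 + (νA - μA ^ 2) / (m : ℝ) ^ 3 * |SR| := by
          refine (abs_add_le _ _).trans ?_
          rw [abs_of_nonneg (by positivity), abs_mul,
            abs_of_nonneg (div_nonneg hvarA hm3.le)]
      _ ≤ 4 * μA ^ 2 / (m : ℝ) ^ 3
          + (νA - μA ^ 2) / (m : ℝ) ^ 3 * ((m : ℝ) ^ 3 * qa m δ) := by
          exact add_le_add_right (mul_le_mul_of_nonneg_left habs
            (div_nonneg hvarA hm3.le)) _
      _ = 4 * μA ^ 2 / (m : ℝ) ^ 3 + (νA - μA ^ 2) * qa m δ := by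
          field_simp
  · rw [hEqB, hSB, ← Complex.ofReal_mul, ← Complex.ofReal_add, Complex.norm_real, Real.norm_eq_abs]
    set SR := eR m δ.2.1 * eR m δ.2.2 + eR m δ.1 * eR m δ.2.2 with hSRdef
    have habs : |SR| ≤ (m : ℝ) ^ 3 * qb m δ := qb_bound m hm δ
    calc |4 * μB ^ 2 / (m : ℝ) ^ 3 + (νB - μB ^ 2) / (m : ℝ) ^ 3 * SR|
        ≤ 4 * μB ^ 2 / (m : ℝ) ^ 3 + (νB - μB ^ 2) / (m : ℝ) ^ 3 * |SR| := by
          refine (abs_add_le _ _).trans ?_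
          rw [abs_of_nonneg (by positivity), abs_mul,
            abs_of_nonneg (div_nonneg hvarB hm3.le)]
      _ ≤ 4 * μB ^ 2 / (m : ℝ) ^ 3
          + (νB - μB ^ 2) / (m : ℝ) ^ 3 * ((m : ℝ) ^ 3 * qb m δ) := by
          exact add_le_add_right (mul_le_mul_of_nonneg_left habs
            (div_nonneg hvarB hm3.le)) _
      _ = 4 * μB ^ 2 / (m : ℝ) ^ 3 + (νB - μB ^ 2) * qb m δ := by
          field_simp
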